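/- For each index i let 𝒫ᵢ′ ⊆ 𝒫ᵢ be nonempty and put 𝒫′ = 𝒫₁′ × ⋯ × 𝒫ₙ′. Assume (H1), (H2), (H3), and (H4); assume A(P) is nonsingular for every P ∈ 𝒫′; and assume that for every U ∈ ℝⁿ, if sup_{P∈𝒫′}{−A(P)U + y(P)} = 0 then sup_{P∈𝒫}{−A(P)U + y(P)} ≤ 0 entrywise. Then the ε-policy-iteration sequence computed over the restricted control set 𝒫′ converges to a vector U that is the unique solution of the Bellman problem over the full control set 𝒫. -/

import Mathlib

open Filter Topology Finset

open scoped Classical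

noncomputable section

/-- Row `i` of `A` is strictly diagonally dominant (SDD). -/
def SDDRow {n : ℕ} (A : Matrix (Fin n) (Fin n) ℝ) (i : Fin n) : Prop :=
  ∑ j ∈ Finset.univ.erase i, |A i j| < |A i i|

/-- `A` is weakly diagonally dominant (WDD). -/
def WDD {n : ℕ} (A : Matrix (Fin n) (Fin n) ℝ) : Prop :=
  ∀ i, ∑ j ∈ Finset.univ.erase i, |A i j| ≤ |A i i|

/-- `A` is a Z-matrix: nonpositive off-diagonal entries. -/
def ZMat {n : ℕ} (A : Matrix (Fin n) (Fin n) ℝ) : Prop :=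
  ∀ i j, i ≠ j → A i j ≤ 0

/-- Row-decoupled data. -/
def RowDecoupled {n : ℕ} {P : Fin n → Type*}
    (A : (∀ i, P i) → Matrix (Fin n) (Fin n) ℝ)
    (y : (∀ i, P i) → (Fin n → ℝ)) : Prop :=
  ∀ p q : ∀ i, P i, ∀ i, p i = q i →
    (∀ j, A p i j = A q i j) ∧ y p i = y q i

/-- `U` solves the Bellman problem `sup_{P∈𝒫} {−A(P)U + y(P)} = 0`. -/
def IsBellmanSol {n : ℕ} {P : Fin n → Type*}
    (A : (∀ i, P i) → Matrix (Fin n) (Fin n) ℝ)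
    (y : (∀ i, P i) → (Fin n → ℝ)) (U : Fin n → ℝ) : Prop :=
  ∀ i, IsLUB (Set.range fun p => y p i - (A p).mulVec U i) 0

/-- (H1): `P ↦ A(P)⁻¹` is bounded on the set of controls with nonsingular matrix. -/
def H1 {n : ℕ} {P : Fin n → Type*}
    (A : (∀ i, P i) → Matrix (Fin n) (Fin n) ℝ) : Prop :=
  ∃ C, ∀ p, IsUnit (A p).det → ∀ i j, |(A p)⁻¹ i j| ≤ C

/-- (H2): `A` and `y` are bounded. -/
def H2 {n : ℕ} {P : Fin n → Type*}
    (A : (∀ i, P i) → Matrix (Fin n) (Fin n) ℝ)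
    (y : (∀ i, P i) → (Fin n → ℝ)) : Prop :=
  ∃ C, ∀ p, (∀ i j, |A p i j| ≤ C) ∧ ∀ i, |y p i| ≤ C

/-- (H3): every `A(P)` is a WDD Z-matrix with nonnegative diagonal entries whose diagonal
entries are at most `1` on rows that are not SDD. -/
def H3 {n : ℕ} {P : Fin n → Type*}
    (A : (∀ i, P i) → Matrix (Fin n) (Fin n) ℝ) : Prop :=
  ∀ p, ZMat (A p) ∧ WDD (A p) ∧ (∀ i, 0 ≤ A p i i) ∧
    ∀ i, ¬ SDDRow (A p) i → A p i i ≤ 1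

/-- `ŷ(P)ᵢ = y(P)ᵢ` if row `i` of `A(P)` is not SDD, and `−∞` otherwise. -/
def yhat {n : ℕ} {P : Fin n → Type*}
    (A : (∀ i, P i) → Matrix (Fin n) (Fin n) ℝ)
    (y : (∀ i, P i) → (Fin n → ℝ)) (p : ∀ i, P i) (i : Fin n) : EReal :=
  if SDDRow (A p) i then ⊥ else ((y p i : ℝ) : EReal)

/-- The operator `𝕄U = U + 𝔸U` on vectors with entries in `ℝ ∪ {−∞}`, where
`[𝔸U]ᵢ = sup_P [−A(P)U + ŷ(P)]ᵢ`, computed with the conventions `r + (−∞) = −∞`,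
`t·(−∞) = −∞` for `t > 0` and `0·(−∞) = 0`; entrywise this reads
`[𝕄U]ᵢ = sup_P { (1 − A(P)ᵢᵢ)·Uᵢ + Σ_{j≠i} (−A(P)ᵢⱼ)·Uⱼ + ŷ(P)ᵢ }`. -/
def Mbb {n : ℕ} {P : Fin n → Type*}
    (A : (∀ i, P i) → Matrix (Fin n) (Fin n) ℝ)
    (y : (∀ i, P i) → (Fin n → ℝ)) (U : Fin n → EReal) : Fin n → EReal :=
  fun i => ⨆ p : ∀ i, P i,
    (((1 - A p i i : ℝ) : EReal) * U i
      + ∑ j ∈ Finset.univ.erase i, ((-A p i j : ℝ) : EReal) * U j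
      + yhat A y p i)

/-- (H4): consecutive applications of `𝕄` are eventually strictly suboptimal. -/
def H4 {n : ℕ} {P : Fin n → Type*}
    (A : (∀ i, P i) → Matrix (Fin n) (Fin n) ℝ)
    (y : (∀ i, P i) → (Fin n → ℝ)) : Prop :=
  ∀ (U : Fin n → ℝ) (i : Fin n), ∃ m₁ m₂ : ℕ, m₁ < m₂ ∧
    (Mbb A y)^[m₂] (fun j => ((U j : ℝ) : EReal)) i
      < (Mbb A y)^[m₁] (fun j => ((U j : ℝ) : EReal)) i

/-! ### Auxiliary matrix lemmas -/

lemma trapped_of_min_neg {n : ℕ} {A : Matrix (Fin n) (Fin n) ℝ}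
    (hZ : ZMat A) (hW : WDD A) (hd : ∀ i, 0 ≤ A i i)
    {v : Fin n → ℝ} (hv : ∀ i, 0 ≤ A.mulVec v i) (hneg : ∃ i, v i < 0) :
    ∃ J : Finset (Fin n), J.Nonempty ∧
      ∀ i ∈ J, ¬ SDDRow A i ∧ ∀ j, j ∉ J → A i j = 0 := by
  obtain ⟨i₀, hi₀⟩ := hneg
  have hne : (Finset.univ : Finset (Fin n)).Nonempty := ⟨i₀, Finset.mem_univ _⟩
  set m := Finset.univ.inf' hne v with hm
  have hmle : ∀ j, m ≤ v j := fun j => Finset.inf'_le _ (Finset.mem_univ j)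
  have hmneg : m < 0 := lt_of_le_of_lt (hmle i₀) hi₀
  refine ⟨Finset.univ.filter (fun j => v j = m), ?_, ?_⟩
  · obtain ⟨j, _, hjm⟩ := Finset.exists_mem_eq_inf' hne v
    exact ⟨j, Finset.mem_filter.2 ⟨Finset.mem_univ _, hjm.symm⟩⟩
  intro i hi
  have hvi : v i = m := (Finset.mem_filter.1 hi).2
  have habs : ∀ j, j ≠ i → A i j = -|A i j| := by
    intro j hj
    rw [abs_of_nonpos (hZ i j (Ne.symm hj)), neg_neg]
  have hT : ∑ j ∈ Finset.univ.erase i, |A i j| ≤ A i i := by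
    have := hW i
    rwa [abs_of_nonneg (hd i)] at this
  set T := ∑ j ∈ Finset.univ.erase i, |A i j| with hTdef
  have hsum : (A.mulVec v) i = A i i * v i + ∑ j ∈ Finset.univ.erase i, A i j * v j := by
    rw [Matrix.mulVec, dotProduct]
    exact (Finset.add_sum_erase _ (fun j => A i j * v j) (Finset.mem_univ i)).symm
  have hterm : ∀ j ∈ Finset.univ.erase i, A i j * v j ≤ A i j * m := by
    intro j hj
    have hji : j ≠ i := (Finset.mem_erase.1 hj).1
    exact mul_le_mul_of_nonpos_left (hmle j) (hZ i j (Ne.symm hji))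
  have hSle : ∑ j ∈ Finset.univ.erase i, A i j * v j ≤ ∑ j ∈ Finset.univ.erase i, A i j * m :=
    Finset.sum_le_sum hterm
  have hsummt : ∑ j ∈ Finset.univ.erase i, A i j * m = -T * m := by
    have hcongr : ∀ j ∈ Finset.univ.erase i, A i j * m = -(|A i j| * m) := by
      intro j hj
      conv_lhs => rw [habs j (Finset.mem_erase.1 hj).1]
      ring
    rw [Finset.sum_congr rfl hcongr, hTdef, neg_mul, Finset.sum_mul]
    exact Finset.sum_neg_distrib _
  have key : 0 ≤ A i i * m + ∑ j ∈ Finset.univ.erase i, A i j * v j := by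
    have := hv i
    rwa [hsum, hvi] at this
  have key2 : A i i * m + ∑ j ∈ Finset.univ.erase i, A i j * v j ≤ (A i i - T) * m := by
    have : A i i * m + ∑ j ∈ Finset.univ.erase i, A i j * m = (A i i - T) * m := by
      rw [hsummt]; ring
    linarith [hSle]
  have hgap0 : A i i - T = 0 := by
    have h1 : 0 ≤ (A i i - T) * m := le_trans key key2
    have h2 : 0 ≤ A i i - T := by linarith [hT]
    nlinarith
  constructor
  · intro hsdd
    rw [SDDRow, abs_of_nonneg (hd i)] at hsdd
    rw [← hTdef] at hsdd
    linarith
  · intro j hj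
    have hSeq : ∑ j ∈ Finset.univ.erase i, A i j * v j
        = ∑ j ∈ Finset.univ.erase i, A i j * m := by
      have hup : (A i i - T) * m = A i i * m + ∑ j ∈ Finset.univ.erase i, A i j * m := by
        rw [hsummt]; ring
      have := le_trans key key2
      rw [hgap0, zero_mul] at this key2
      -- key : 0 ≤ lhs, key2 : lhs ≤ 0
      have hlhs0 : A i i * m + ∑ j ∈ Finset.univ.erase i, A i j * v j = 0 :=
        le_antisymm key2 key
      have hrhs : A i i * m + ∑ j ∈ Finset.univ.erase i, A i j * m = 0 := by
        rw [← hup, hgap0, zero_mul]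
      linarith
    have heach := (Finset.sum_eq_sum_iff_of_le hterm).1 hSeq
    have hji : j ≠ i := by
      rintro rfl; exact hj hi
    have hjmem : j ∈ Finset.univ.erase i := Finset.mem_erase.2 ⟨hji, Finset.mem_univ _⟩
    have := heach j hjmem
    have hvj : v j ≠ m := fun h => hj (Finset.mem_filter.2 ⟨Finset.mem_univ _, h⟩)
    have : A i j * (v j - m) = 0 := by linarith [this]
    rcases mul_eq_zero.1 this with h | h
    · exact h
    · exact absurd (by linarith [sub_eq_zero.1 h] : v j = m) hvj
lemma det_eq_zero_of_trapped {n : ℕ} {A : Matrix (Fin n) (Fin n) ℝ}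
    (hZ : ZMat A) (hW : WDD A) (hd : ∀ i, 0 ≤ A i i)
    {J : Finset (Fin n)} (hJne : J.Nonempty)
    (hJ : ∀ i ∈ J, ¬ SDDRow A i ∧ ∀ j, j ∉ J → A i j = 0) :
    A.det = 0 := by
  have hrowsum : ∀ i ∈ J, ∑ j ∈ J, A i j = 0 := by
    intro i hi
    obtain ⟨hnsdd, hzero⟩ := hJ i hi
    have hTeq : ∑ j ∈ Finset.univ.erase i, |A i j| = A i i := by
      have h1 := hW i
      rw [abs_of_nonneg (hd i)] at h1
      have h2 : ¬ (∑ j ∈ Finset.univ.erase i, |A i j| < A i i) := fun h =>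
        hnsdd (by rwa [SDDRow, abs_of_nonneg (hd i)])
      linarith [(lt_or_ge (∑ j ∈ Finset.univ.erase i, |A i j|) (A i i)).resolve_left h2]
    have hsub : ∑ j ∈ J.erase i, |A i j| = ∑ j ∈ Finset.univ.erase i, |A i j| := by
      apply Finset.sum_subset
      · intro j hj
        exact Finset.mem_erase.2 ⟨(Finset.mem_erase.1 hj).1, Finset.mem_univ _⟩
      · intro j hj hj2
        have hji : j ≠ i := (Finset.mem_erase.1 hj).1
        have hjJ : j ∉ J := fun hm => hj2 (Finset.mem_erase.2 ⟨hji, hm⟩)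
        rw [hzero j hjJ, abs_zero]
    have hsplit : ∑ j ∈ J, A i j = A i i + ∑ j ∈ J.erase i, A i j :=
      (Finset.add_sum_erase _ (fun j => A i j) hi).symm
    have hcongr : ∑ j ∈ J.erase i, A i j = -∑ j ∈ J.erase i, |A i j| := by
      rw [← Finset.sum_neg_distrib]
      apply Finset.sum_congr rfl
      intro j hj
      have hji : j ≠ i := (Finset.mem_erase.1 hj).1
      rw [abs_of_nonpos (hZ i j (Ne.symm hji)), neg_neg]
    rw [hsplit, hcongr, hsub, hTeq]
    ring
  -- block decomposition
  classical
  let e := Equiv.sumCompl (fun a => a ∈ J)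
  have hdet : (A.submatrix e e).det = A.det := Matrix.det_submatrix_equiv_self e A
  set B := A.submatrix e e with hB
  have hblocks : B = Matrix.fromBlocks B.toBlocks₁₁ B.toBlocks₁₂ B.toBlocks₂₁ B.toBlocks₂₂ :=
    (Matrix.fromBlocks_toBlocks B).symm
  have h12 : B.toBlocks₁₂ = 0 := by
    ext i j
    have : B (Sum.inl i) (Sum.inr j) = A i.1 j.1 := by
      simp [hB, Matrix.submatrix_apply, e]
    simp only [Matrix.toBlocks₁₂, Matrix.of_apply, this, Matrix.zero_apply]
    exact (hJ i.1 i.2).2 j.1 j.2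
  have hdet11 : B.toBlocks₁₁.det = 0 := by
    rw [← Matrix.exists_mulVec_eq_zero_iff]
    refine ⟨fun _ => 1, ?_, ?_⟩
    · obtain ⟨j, hj⟩ := hJne
      intro h
      have := congrFun h ⟨j, hj⟩
      norm_num at this
    · funext i
      have hentry : ∀ j : {a // a ∈ J}, B.toBlocks₁₁ i j = A i.1 j.1 := by
        intro j
        simp [Matrix.toBlocks₁₁, hB, Matrix.submatrix_apply, e]
      simp only [Matrix.mulVec, dotProduct, hentry, mul_one, Pi.zero_apply]
      rw [← Finset.sum_subtype J (fun x => Iff.rfl) (fun j => A i.1 j)]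
      exact hrowsum i.1 i.2
  rw [← hdet, hblocks, h12, Matrix.det_fromBlocks_zero₁₂, hdet11, zero_mul]
lemma mulVec_nonneg_imp {n : ℕ} {A : Matrix (Fin n) (Fin n) ℝ}
    (hZ : ZMat A) (hW : WDD A) (hd : ∀ i, 0 ≤ A i i) (hU : IsUnit A.det)
    {v : Fin n → ℝ} (hv : ∀ i, 0 ≤ A.mulVec v i) : ∀ i, 0 ≤ v i := by
  by_contra h
  push_neg at h
  obtain ⟨i, hi⟩ := h
  obtain ⟨J, hJne, hJ⟩ := trapped_of_min_neg hZ hW hd hv ⟨i, hi⟩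
  exact hU.ne_zero (det_eq_zero_of_trapped hZ hW hd hJne hJ)

lemma inv_entry_nonneg {n : ℕ} {A : Matrix (Fin n) (Fin n) ℝ}
    (hZ : ZMat A) (hW : WDD A) (hd : ∀ i, 0 ≤ A i i) (hU : IsUnit A.det) :
    ∀ i j, 0 ≤ A⁻¹ i j := by
  intro i j
  have h := mulVec_nonneg_imp hZ hW hd hU (v := fun k => A⁻¹ k j) ?_ i
  · exact h
  · intro k
    have : A.mulVec (fun l => A⁻¹ l j) k = (A * A⁻¹) k j := by
      simp [Matrix.mulVec, dotProduct, Matrix.mul_apply]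
    rw [this, Matrix.mul_nonsing_inv A hU, Matrix.one_apply]
    split <;> norm_num

/-- key quantitative bound: if `A x ≤ ε 𝟙` then `x ≤ n C ε`. -/
lemma mulVec_le_imp {n : ℕ} {A : Matrix (Fin n) (Fin n) ℝ}
    (hZ : ZMat A) (hW : WDD A) (hd : ∀ i, 0 ≤ A i i) (hU : IsUnit A.det)
    {C : ℝ} (hC : ∀ i j, |A⁻¹ i j| ≤ C)
    {x : Fin n → ℝ} {ε : ℝ} (hε : 0 ≤ ε) (hx : ∀ i, A.mulVec x i ≤ ε) :
    ∀ i, x i ≤ n * C * ε := by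
  intro i
  have hxi : x i = ∑ j, A⁻¹ i j * A.mulVec x j := by
    have h1 : (A⁻¹ * A).mulVec x = x := by
      rw [Matrix.nonsing_inv_mul A hU, Matrix.one_mulVec]
    have h2 : A⁻¹.mulVec (A.mulVec x) = x := by
      rw [Matrix.mulVec_mulVec]; exact h1
    calc x i = A⁻¹.mulVec (A.mulVec x) i := by rw [h2]
    _ = ∑ j, A⁻¹ i j * A.mulVec x j := by simp [Matrix.mulVec, dotProduct]
  rw [hxi]
  have hbound : ∀ j : Fin n, A⁻¹ i j * A.mulVec x j ≤ C * ε := by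
    intro j
    have h0 : 0 ≤ A⁻¹ i j := inv_entry_nonneg hZ hW hd hU i j
    calc A⁻¹ i j * A.mulVec x j ≤ A⁻¹ i j * ε := mul_le_mul_of_nonneg_left (hx j) h0
    _ ≤ C * ε := mul_le_mul_of_nonneg_right (le_trans (le_abs_self _) (hC i j)) hε
  calc ∑ j, A⁻¹ i j * A.mulVec x j ≤ ∑ _j : Fin n, C * ε := Finset.sum_le_sum fun j _ => hbound j
  _ = n * C * ε := by simp [Finset.sum_const]; ring
/-! ### EReal helpers -/

def erealHom : ℝ →+ EReal where
  toFun := fun x => (x : EReal)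
  map_zero' := rfl
  map_add' := EReal.coe_add

lemma ereal_coe_sum {m : ℕ} (s : Finset (Fin m)) (f : Fin m → ℝ) :
    ((∑ j ∈ s, f j : ℝ) : EReal) = ∑ j ∈ s, ((f j : ℝ) : EReal) :=
  map_sum erealHom f s

lemma ereal_mul_mono {c : ℝ} (hc : 0 ≤ c) {a b : EReal} (h : a ≤ b) :
    (c : EReal) * a ≤ (c : EReal) * b :=
  mul_le_mul_of_nonneg_left h (by exact_mod_cast hc)

lemma ereal_coe_mul_le {c : ℝ} (hc : 0 ≤ c) {r : ℝ} {a : EReal} (h : (r : EReal) ≤ a) :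
    ((c * r : ℝ) : EReal) ≤ (c : EReal) * a := by
  rw [EReal.coe_mul]; exact ereal_mul_mono hc h

/-- gap is zero on non-SDD rows -/
lemma row_gap_zero {n : ℕ} {A : Matrix (Fin n) (Fin n) ℝ}
    (hW : WDD A) (hd : ∀ i, 0 ≤ A i i) {i : Fin n} (hnsdd : ¬ SDDRow A i) :
    ∑ j ∈ Finset.univ.erase i, |A i j| = A i i := by
  have h1 := hW i
  rw [abs_of_nonneg (hd i)] at h1
  have h2 : ¬ (∑ j ∈ Finset.univ.erase i, |A i j| < A i i) := fun h =>
    hnsdd (by rwa [SDDRow, abs_of_nonneg (hd i)])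
  linarith [(lt_or_ge (∑ j ∈ Finset.univ.erase i, |A i j|) (A i i)).resolve_left h2]

/-! ### Mbb lemmas -/

section MbbLemmas

variable {n : ℕ} {P : Fin n → Type*} [∀ i, Nonempty (P i)]
  (A : (∀ i, P i) → Matrix (Fin n) (Fin n) ℝ) (y : (∀ i, P i) → Fin n → ℝ)

/-- the summand in the definition of `Mbb` -/
def MbbTerm (p : ∀ i, P i) (W : Fin n → EReal) (i : Fin n) : EReal :=
  ((1 - A p i i : ℝ) : EReal) * W i
    + ∑ j ∈ Finset.univ.erase i, ((-A p i j : ℝ) : EReal) * W j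
    + yhat A y p i

lemma Mbb_eq_iSup (W : Fin n → EReal) (i : Fin n) :
    Mbb A y W i = ⨆ p : ∀ i, P i, MbbTerm A y p W i := rfl

lemma MbbTerm_of_sdd {p : ∀ i, P i} {i : Fin n} (h : SDDRow (A p) i) (W : Fin n → EReal) :
    MbbTerm A y p W i = ⊥ := by
  rw [MbbTerm, yhat, if_pos h, EReal.add_bot]

lemma MbbTerm_mono (h3 : H3 A) (p : ∀ i, P i) {W W' : Fin n → EReal}
    (h : ∀ j, W j ≤ W' j) (i : Fin n) : MbbTerm A y p W i ≤ MbbTerm A y p W' i := by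
  by_cases hsdd : SDDRow (A p) i
  · rw [MbbTerm_of_sdd A y hsdd, MbbTerm_of_sdd A y hsdd]
  · obtain ⟨hZ, hW, hd, hdle⟩ := h3 p
    refine add_le_add ?_ (le_refl _)
    apply add_le_add
    · exact ereal_mul_mono (by linarith [hdle i hsdd]) (h i)
    · exact Finset.sum_le_sum fun j hj =>
        ereal_mul_mono (by linarith [hZ i j (Ne.symm (Finset.mem_erase.1 hj).1)]) (h j)

lemma Mbb_mono (h3 : H3 A) {W W' : Fin n → EReal} (h : ∀ j, W j ≤ W' j) (i : Fin n) :
    Mbb A y W i ≤ Mbb A y W' i :=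
  iSup_mono fun p => MbbTerm_mono A y h3 p h i

lemma MbbTerm_coe_eval {p : ∀ i, P i} {i : Fin n} (hnsdd : ¬ SDDRow (A p) i) (V : Fin n → ℝ) :
    MbbTerm A y p (fun j => ((V j : ℝ) : EReal)) i
      = ((V i - (A p).mulVec V i + y p i : ℝ) : EReal) := by
  rw [MbbTerm, yhat, if_neg hnsdd]
  have hsum : ∑ j ∈ Finset.univ.erase i, ((-A p i j : ℝ) : EReal) * ((V j : ℝ) : EReal)
      = ((∑ j ∈ Finset.univ.erase i, (-A p i j) * V j : ℝ) : EReal) := by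
    rw [ereal_coe_sum]
    exact Finset.sum_congr rfl fun j _ => (EReal.coe_mul _ _).symm
  rw [hsum, ← EReal.coe_mul, ← EReal.coe_add, ← EReal.coe_add]
  congr 1
  have hmv : (A p).mulVec V i = A p i i * V i + ∑ j ∈ Finset.univ.erase i, A p i j * V j := by
    rw [Matrix.mulVec, dotProduct]
    exact (Finset.add_sum_erase _ (fun j => A p i j * V j) (Finset.mem_univ i)).symm
  have hneg : ∑ j ∈ Finset.univ.erase i, (-A p i j) * V j
      = -∑ j ∈ Finset.univ.erase i, A p i j * V j := by
    rw [← Finset.sum_neg_distrib]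
    exact Finset.sum_congr rfl fun j _ => by ring
  rw [hneg, hmv]
  ring

lemma Mbb_le_self (h3 : H3 A) {V : Fin n → ℝ}
    (hsub : ∀ (p : ∀ i, P i) (i : Fin n), y p i - (A p).mulVec V i ≤ 0) (i : Fin n) :
    Mbb A y (fun j => ((V j : ℝ) : EReal)) i ≤ ((V i : ℝ) : EReal) := by
  rw [Mbb_eq_iSup]
  apply iSup_le
  intro p
  by_cases hsdd : SDDRow (A p) i
  · rw [MbbTerm_of_sdd A y hsdd]; exact bot_le
  · rw [MbbTerm_coe_eval A y hsdd]
    exact_mod_cast (by linarith [hsub p i] : V i - (A p).mulVec V i + y p i ≤ V i)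

lemma Mbb_iter_antitone (h3 : H3 A) {V : Fin n → ℝ}
    (hsub : ∀ (p : ∀ i, P i) (i : Fin n), y p i - (A p).mulVec V i ≤ 0) :
    ∀ m₁ m₂, m₁ ≤ m₂ → ∀ i,
      (Mbb A y)^[m₂] (fun j => ((V j : ℝ) : EReal)) i
        ≤ (Mbb A y)^[m₁] (fun j => ((V j : ℝ) : EReal)) i := by
  have hstep : ∀ m i, (Mbb A y)^[m + 1] (fun j => ((V j : ℝ) : EReal)) i
      ≤ (Mbb A y)^[m] (fun j => ((V j : ℝ) : EReal)) i := by
    intro m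
    induction m with
    | zero => intro i; simpa using Mbb_le_self A y h3 hsub i
    | succ k ih =>
        intro i
        conv_lhs => rw [Function.iterate_succ_apply']
        conv_rhs => rw [Function.iterate_succ_apply']
        exact Mbb_mono A y h3 (fun j => ih j) i
  intro m₁ m₂ hle
  induction hle with
  | refl => intro i; exact le_refl _
  | step h ih =>
      intro i
      exact le_trans (hstep _ i) (ih i)
lemma Mbb_iter_lower_bound (h3 : H3 A) {V : Fin n → ℝ} {p : ∀ i, P i}
    {J : Finset (Fin n)} {ε : ℝ} (hε : 0 ≤ ε)
    (hrow : ∀ i ∈ J, ¬ SDDRow (A p) i ∧ (∀ j, j ∉ J → A p i j = 0)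
      ∧ -ε ≤ y p i - (A p).mulVec V i) :
    ∀ m : ℕ, ∀ i ∈ J, ((V i - (m : ℝ) * ε : ℝ) : EReal)
      ≤ (Mbb A y)^[m] (fun j => ((V j : ℝ) : EReal)) i := by
  intro m
  induction m with
  | zero => intro i _; simp
  | succ k ih =>
      intro i hi
      obtain ⟨hnsdd, hzero, hopt⟩ := hrow i hi
      obtain ⟨hZ, hW, hd, hdle⟩ := h3 p
      set W := (Mbb A y)^[k] (fun j => ((V j : ℝ) : EReal)) with hWdef
      rw [Function.iterate_succ_apply']
      have hle : MbbTerm A y p W i ≤ Mbb A y W i := le_iSup (fun q => MbbTerm A y q W i) p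
      refine le_trans ?_ hle
      -- lower bound the term
      set z : Fin n → ℝ := fun j => V j - (k : ℝ) * ε with hzdef
      have hterm1 : (((1 - A p i i) * z i : ℝ) : EReal) ≤ ((1 - A p i i : ℝ) : EReal) * W i :=
        ereal_coe_mul_le (by linarith [hdle i hnsdd]) (ih i hi)
      have hterm2 : ∀ j ∈ Finset.univ.erase i,
          (((-A p i j) * z j : ℝ) : EReal) ≤ ((-A p i j : ℝ) : EReal) * W j := by
        intro j hj
        by_cases hjJ : j ∈ J
        · exact ereal_coe_mul_le
            (by linarith [hZ i j (Ne.symm (Finset.mem_erase.1 hj).1)]) (ih j hjJ)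
        · rw [hzero j hjJ]
          norm_num
      have hsumle : ((∑ j ∈ Finset.univ.erase i, (-A p i j) * z j : ℝ) : EReal)
          ≤ ∑ j ∈ Finset.univ.erase i, ((-A p i j : ℝ) : EReal) * W j := by
        rw [ereal_coe_sum]
        exact Finset.sum_le_sum hterm2
      have htot : (((1 - A p i i) * z i + ∑ j ∈ Finset.univ.erase i, (-A p i j) * z j
            + y p i : ℝ) : EReal) ≤ MbbTerm A y p W i := by
        rw [MbbTerm, yhat, if_neg hnsdd, EReal.coe_add, EReal.coe_add]
        exact add_le_add (add_le_add hterm1 hsumle) (le_refl _)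
      refine le_trans ?_ htot
      rw [EReal.coe_le_coe_iff]
      -- real arithmetic
      have hmv : (A p).mulVec V i = A p i i * V i + ∑ j ∈ Finset.univ.erase i, A p i j * V j := by
        rw [Matrix.mulVec, dotProduct]
        exact (Finset.add_sum_erase _ (fun j => A p i j * V j) (Finset.mem_univ i)).symm
      have hgap : ∑ j ∈ Finset.univ.erase i, |A p i j| = A p i i := row_gap_zero hW hd hnsdd
      have hsplit : ∑ j ∈ Finset.univ.erase i, (-A p i j) * z j
          = -(∑ j ∈ Finset.univ.erase i, A p i j * V j)
            - ((k : ℝ) * ε) * (∑ j ∈ Finset.univ.erase i, |A p i j|) := by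
        rw [← Finset.sum_neg_distrib, Finset.mul_sum, ← Finset.sum_sub_distrib]
        apply Finset.sum_congr rfl
        intro j hj
        have habs : |A p i j| = -A p i j :=
          abs_of_nonpos (hZ i j (Ne.symm (Finset.mem_erase.1 hj).1))
        rw [hzdef, habs]
        ring
      rw [hsplit, hgap, hzdef]
      have hAV := hmv
      push_cast
      nlinarith [hopt, hmv]
  
lemma ereal_lt_coe_delta {x : EReal} {r : ℝ} (h : x < (r : EReal)) :
    ∃ δ : ℝ, 0 < δ ∧ x ≤ ((r - δ : ℝ) : EReal) := by
  induction x using EReal.rec with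
  | bot => exact ⟨1, by norm_num, bot_le⟩
  | coe z =>
      refine ⟨(r - z) / 2, by linarith [EReal.coe_lt_coe_iff.1 h], ?_⟩
      exact_mod_cast (by linarith [EReal.coe_lt_coe_iff.1 h] : z ≤ r - (r - z) / 2)
  | top => exact absurd h (by simp)

end MbbLemmas
/-- Policy iteration on a restricted control set: assume (H1)–(H4), that `A(P)` is
nonsingular for every control `P` in the restricted set `𝒫′ = 𝒫₁′ × ⋯ × 𝒫ₙ′`, and that
every solution of the Bellman problem over `𝒫′` is subharmonic for the full problem
(i.e. `sup_{P∈𝒫} {−A(P)U + y(P)} ≤ 0` entrywise). Then the ε-policy-iteration sequence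
computed over `𝒫′` converges to the unique solution of the Bellman problem over `𝒫`. -/
theorem restricted_policy_iteration_converges
    {n : ℕ} (hn : 1 ≤ n) {P : Fin n → Type*} [∀ i, Nonempty (P i)]
    (A : (∀ i, P i) → Matrix (Fin n) (Fin n) ℝ) (y : (∀ i, P i) → Fin n → ℝ)
    (hrd : RowDecoupled A y)
    (h1 : H1 A) (h2 : H2 A y) (h3 : H3 A) (h4 : H4 A y)
    (P' : ∀ i, Set (P i)) (hP'ne : ∀ i, (P' i).Nonempty)
    (hns : ∀ p : ∀ i, P i, (∀ i, p i ∈ P' i) → IsUnit (A p).det)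
    (hinv : ∀ U : Fin n → ℝ,
      (∀ i, IsLUB
        (Set.range fun p : {p : ∀ i, P i // ∀ i, p i ∈ P' i} =>
          y p.1 i - (A p.1).mulVec U i) 0) →
      ∀ (i : Fin n) (p : ∀ i, P i), y p i - (A p).mulVec U i ≤ 0)
    (U : ℕ → Fin n → ℝ) (ε : ℕ → ℝ) (Pc : ℕ → ∀ i, P i)
    (hPc : ∀ ℓ i, Pc ℓ i ∈ P' i)
    (hε : ∀ ℓ, 0 < ε ℓ) (hsum : Summable ε)
    (happrox : ∀ (ℓ : ℕ) (i : Fin n) (p : ∀ i, P i), (∀ i, p i ∈ P' i) →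
      y p i - (A p).mulVec (U ℓ) i ≤ y (Pc ℓ) i - (A (Pc ℓ)).mulVec (U ℓ) i + ε ℓ)
    (hsolve : ∀ ℓ, (A (Pc ℓ)).mulVec (U (ℓ + 1)) = y (Pc ℓ)) :
    ∃ Ustar : Fin n → ℝ, Tendsto U atTop (𝓝 Ustar) ∧
      IsBellmanSol A y Ustar ∧ ∀ V, IsBellmanSol A y V → V = Ustar := by
  classical
  obtain ⟨C₁, hC₁⟩ := h1
  obtain ⟨C₂, hC₂⟩ := h2
  set i0 : Fin n := ⟨0, hn⟩ with hi0
  have hPcU : ∀ ℓ, IsUnit (A (Pc ℓ)).det := fun ℓ => hns (Pc ℓ) (hPc ℓ)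
  have hC₁0 : 0 ≤ C₁ := le_trans (abs_nonneg _) (hC₁ (Pc 0) (hPcU 0) i0 i0)
  have hC₂0 : 0 ≤ C₂ := le_trans (abs_nonneg _) ((hC₂ (Pc 0)).1 i0 i0)
  set K : ℝ := (n : ℝ) * C₁ with hK
  have hK0 : 0 ≤ K := mul_nonneg (Nat.cast_nonneg n) hC₁0
  -- the quantitative comparison tool
  have key : ∀ (q : ∀ i, P i), IsUnit (A q).det → ∀ (x : Fin n → ℝ) (η : ℝ), 0 ≤ η →
      (∀ i, (A q).mulVec x i ≤ η) → ∀ i, x i ≤ K * η := by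
    intro q hq x η hη hx i
    obtain ⟨hZ, hW, hd, _⟩ := h3 q
    exact mulVec_le_imp hZ hW hd hq (hC₁ q hq) hη hx i
  -- one-step almost-monotonicity
  have hstep : ∀ m i, U (m + 1) i - U (m + 2) i ≤ K * ε (m + 1) := by
    intro m i
    have h0 : ∀ i, (A (Pc (m + 1))).mulVec (U (m + 1) - U (m + 2)) i ≤ ε (m + 1) := by
      intro j
      rw [Matrix.mulVec_sub, Pi.sub_apply, hsolve (m + 1)]
      have ha := happrox (m + 1) j (Pc m) (hPc m)
      have hz : y (Pc m) j - (A (Pc m)).mulVec (U (m + 1)) j = 0 := by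
        rw [hsolve m]; ring
      linarith
    have := key (Pc (m + 1)) (hPcU (m + 1)) _ _ (le_of_lt (hε (m + 1))) h0 i
    simpa using this
  -- uniform upper bound
  have hub : ∀ m i, U (m + 1) i ≤ K * C₂ := by
    intro m i
    apply key (Pc m) (hPcU m) _ _ hC₂0 _ i
    intro j
    rw [hsolve m]
    exact le_trans (le_abs_self _) ((hC₂ (Pc m)).2 j)
  -- convergence of U
  have hsum1 : Summable (fun k => ε (k + 1)) := (summable_nat_add_iff 1).2 hsum
  have hconv : ∀ i, ∃ L, Tendsto (fun m => U m i) atTop (𝓝 L) := by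
    intro i
    set S : ℕ → ℝ := fun m => ∑ k ∈ Finset.range m, ε (k + 1) with hS
    have hStend : Tendsto S atTop (𝓝 (∑' k, ε (k + 1))) := hsum1.hasSum.tendsto_sum_nat
    set W : ℕ → ℝ := fun m => U (m + 1) i + K * S m with hW
    have hWmono : Monotone W := by
      apply monotone_nat_of_le_succ
      intro m
      have h1 := hstep m i
      have h2 : S (m + 1) = S m + ε (m + 1) := Finset.sum_range_succ _ _
      simp only [hW]
      rw [h2]
      have : K * (S m + ε (m + 1)) = K * S m + K * ε (m + 1) := by ring
      rw [this]
      linarith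
    have hWbdd : BddAbove (Set.range W) := by
      refine ⟨K * C₂ + K * (∑' k, ε (k + 1)), ?_⟩
      rintro _ ⟨m, rfl⟩
      have h1 : S m ≤ ∑' k, ε (k + 1) :=
        Summable.sum_le_tsum _ (fun k _ => le_of_lt (hε (k + 1))) hsum1
      have := hub m i
      simp only [hW]
      nlinarith
    have hWtend : Tendsto W atTop (𝓝 (⨆ m, W m)) := tendsto_atTop_ciSup hWmono hWbdd
    refine ⟨(⨆ m, W m) - K * (∑' k, ε (k + 1)), ?_⟩
    have hU1 : Tendsto (fun m => U (m + 1) i) atTop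
        (𝓝 ((⨆ m, W m) - K * (∑' k, ε (k + 1)))) := by
      have : (fun m => U (m + 1) i) = fun m => W m - K * S m := by
        funext m; simp only [hW]; ring
      rw [this]
      exact hWtend.sub ((hStend.const_mul K))
    exact (tendsto_add_atTop_iff_nat 1).1 hU1
  choose Ustar htend using hconv
  -- residuals
  set s : ℕ → Fin n → ℝ := fun ℓ i => y (Pc ℓ) i - (A (Pc ℓ)).mulVec Ustar i with hs
  set s' : ℕ → Fin n → ℝ := fun ℓ i => y (Pc ℓ) i - (A (Pc ℓ)).mulVec (U ℓ) i with hs'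
  have hsrw : ∀ ℓ i, s ℓ i = (A (Pc ℓ)).mulVec (U (ℓ + 1) - Ustar) i := by
    intro ℓ i
    rw [Matrix.mulVec_sub, Pi.sub_apply, hsolve ℓ]
  have hs'rw : ∀ ℓ i, s' ℓ i = (A (Pc ℓ)).mulVec (U (ℓ + 1) - U ℓ) i := by
    intro ℓ i
    rw [Matrix.mulVec_sub, Pi.sub_apply, hsolve ℓ]
  -- generic bound : |A(Pc ℓ) v i| ≤ C₂ * ∑ |v j|
  have habsmv : ∀ (ℓ : ℕ) (v : Fin n → ℝ) (i : Fin n),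
      |(A (Pc ℓ)).mulVec v i| ≤ C₂ * ∑ j, |v j| := by
    intro ℓ v i
    rw [Matrix.mulVec, dotProduct]
    refine le_trans (Finset.abs_sum_le_sum_abs _ _) ?_
    rw [Finset.mul_sum]
    apply Finset.sum_le_sum
    intro j _
    rw [abs_mul]
    exact mul_le_mul_of_nonneg_right ((hC₂ (Pc ℓ)).1 i j) (abs_nonneg _)
  have hdiff0 : ∀ i, Tendsto (fun ℓ => U (ℓ + 1) i - Ustar i) atTop (𝓝 0) := by
    intro i
    have := ((tendsto_add_atTop_iff_nat 1).2 (htend i)).sub (tendsto_const_nhds (x := Ustar i))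
    simpa using this
  have hdiff1 : ∀ i, Tendsto (fun ℓ => U (ℓ + 1) i - U ℓ i) atTop (𝓝 0) := by
    intro i
    have := ((tendsto_add_atTop_iff_nat 1).2 (htend i)).sub (htend i)
    simpa using this
  -- sums of abs tend to zero
  have habs0 : ∀ (d : ℕ → Fin n → ℝ), (∀ j, Tendsto (fun ℓ => d ℓ j) atTop (𝓝 0)) →
      Tendsto (fun ℓ => C₂ * ∑ j, |d ℓ j|) atTop (𝓝 0) := by
    intro d hd
    have hsum0 : Tendsto (fun ℓ => ∑ j, |d ℓ j|) atTop (𝓝 0) := by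
      have h0 : Tendsto (fun ℓ => ∑ j : Fin n, |d ℓ j|) atTop (𝓝 (∑ j : Fin n, (0:ℝ))) := by
        apply tendsto_finset_sum
        intro j _
        simpa using (hd j).abs
      simpa using h0
    simpa using hsum0.const_mul C₂
  have hst : Tendsto (fun ℓ => C₂ * ∑ j, |U (ℓ + 1) j - Ustar j|) atTop (𝓝 0) :=
    habs0 _ (fun j => hdiff0 j)
  have hs't : Tendsto (fun ℓ => C₂ * ∑ j, |U (ℓ + 1) j - U ℓ j|) atTop (𝓝 0) :=
    habs0 _ (fun j => hdiff1 j)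
  have hsbound : ∀ ℓ i, |s ℓ i| ≤ C₂ * ∑ j, |U (ℓ + 1) j - Ustar j| := by
    intro ℓ i
    rw [hsrw ℓ i]
    exact le_trans (habsmv ℓ _ i) (by apply le_of_eq; congr 1)
  have hs'bound : ∀ ℓ i, |s' ℓ i| ≤ C₂ * ∑ j, |U (ℓ + 1) j - U ℓ j| := by
    intro ℓ i
    rw [hs'rw ℓ i]
    exact le_trans (habsmv ℓ _ i) (by apply le_of_eq; congr 1)
  have hstend : ∀ i, Tendsto (fun ℓ => s ℓ i) atTop (𝓝 0) := by
    intro i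
    apply tendsto_of_tendsto_of_tendsto_of_le_of_le (g := fun ℓ => -(C₂ * ∑ j, |U (ℓ+1) j - Ustar j|))
      (h := fun ℓ => C₂ * ∑ j, |U (ℓ+1) j - Ustar j|)
    · simpa using hst.neg
    · exact hst
    · intro ℓ; exact neg_le_of_neg_le (by linarith [abs_le.1 (hsbound ℓ i) |>.1])
    · intro ℓ; exact (abs_le.1 (hsbound ℓ i)).2
  have hs'tend : ∀ i, Tendsto (fun ℓ => s' ℓ i) atTop (𝓝 0) := by
    intro i
    apply tendsto_of_tendsto_of_tendsto_of_le_of_le (g := fun ℓ => -(C₂ * ∑ j, |U (ℓ+1) j - U ℓ j|))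
      (h := fun ℓ => C₂ * ∑ j, |U (ℓ+1) j - U ℓ j|)
    · simpa using hs't.neg
    · exact hs't
    · intro ℓ; exact neg_le_of_neg_le (by linarith [abs_le.1 (hs'bound ℓ i) |>.1])
    · intro ℓ; exact (abs_le.1 (hs'bound ℓ i)).2
  have hε0 : Tendsto ε atTop (𝓝 0) := hsum.tendsto_atTop_zero
  -- Ustar is a subsolution over P'
  have hsubP' : ∀ (q : ∀ i, P i), (∀ i, q i ∈ P' i) → ∀ i,
      y q i - (A q).mulVec Ustar i ≤ 0 := by
    intro q hq i
    have hlhs : Tendsto (fun ℓ => y q i - (A q).mulVec (U ℓ) i) atTop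
        (𝓝 (y q i - (A q).mulVec Ustar i)) := by
      apply Tendsto.const_sub
      have : Tendsto (fun ℓ => ∑ j, A q i j * U ℓ j) atTop (𝓝 (∑ j, A q i j * Ustar j)) := by
        apply tendsto_finset_sum
        intro j _
        exact (htend j).const_mul _
      simpa [Matrix.mulVec, dotProduct] using this
    have hrhs : Tendsto (fun ℓ => s' ℓ i + ε ℓ) atTop (𝓝 0) := by
      simpa using (hs'tend i).add hε0
    refine le_of_tendsto_of_tendsto' hlhs hrhs ?_
    intro ℓ
    exact happrox ℓ i q hq
  -- Ustar solves the restricted Bellman problem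
  have hlubP' : ∀ i, IsLUB
      (Set.range fun p : {p : ∀ i, P i // ∀ i, p i ∈ P' i} =>
        y p.1 i - (A p.1).mulVec Ustar i) 0 := by
    intro i
    constructor
    · rintro _ ⟨q, rfl⟩
      exact hsubP' q.1 q.2 i
    · intro b hb
      have hble : ∀ ℓ, s ℓ i ≤ b := fun ℓ => hb ⟨⟨Pc ℓ, hPc ℓ⟩, rfl⟩
      exact le_of_tendsto' (hstend i) hble
  have hsubfull : ∀ (i : Fin n) (p : ∀ i, P i), y p i - (A p).mulVec Ustar i ≤ 0 :=
    hinv Ustar hlubP'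
  have hBell : IsBellmanSol A y Ustar := by
    intro i
    constructor
    · rintro _ ⟨q, rfl⟩
      exact hsubfull i q
    · intro b hb
      have hble : ∀ ℓ, s ℓ i ≤ b := fun ℓ => hb ⟨Pc ℓ, rfl⟩
      exact le_of_tendsto' (hstend i) hble
  refine ⟨Ustar, tendsto_pi_nhds.2 htend, hBell, ?_⟩
  -- uniqueness
  intro V hV
  have hsubV : ∀ (p : ∀ i, P i) (i : Fin n), y p i - (A p).mulVec V i ≤ 0 := by
    intro p i
    exact (hV i).1 ⟨p, rfl⟩
  -- direction 1 : Ustar ≤ V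
  have hdir1 : ∀ i, Ustar i ≤ V i := by
    intro i
    have hstep1 : ∀ ℓ i, Ustar i - V i ≤ K * (C₂ * ∑ j, |U (ℓ + 1) j - Ustar j|) := by
      intro ℓ i
      have hbd : ∀ i, (A (Pc ℓ)).mulVec (Ustar - V) i ≤ C₂ * ∑ j, |U (ℓ + 1) j - Ustar j| := by
        intro i
        rw [Matrix.mulVec_sub, Pi.sub_apply]
        have h1 : y (Pc ℓ) i - (A (Pc ℓ)).mulVec V i ≤ 0 := hsubV (Pc ℓ) i
        have h2 : -(s ℓ i) ≤ |s ℓ i| := neg_le_abs _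
        have h3 := hsbound ℓ i
        simp only [hs] at h2 h3 ⊢
        linarith
      have hnn : 0 ≤ C₂ * ∑ j, |U (ℓ + 1) j - Ustar j| :=
        mul_nonneg hC₂0 (Finset.sum_nonneg fun j _ => abs_nonneg _)
      have := key (Pc ℓ) (hPcU ℓ) _ _ hnn hbd i
      simpa using this
    have hlim : Tendsto (fun ℓ => K * (C₂ * ∑ j, |U (ℓ + 1) j - Ustar j|)) atTop (𝓝 0) := by
      simpa using hst.const_mul K
    have := ge_of_tendsto' hlim (fun ℓ => hstep1 ℓ i)
    linarith
  -- direction 2 : V ≤ Ustar (uses H4)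
  have hdir2 : ∀ i, V i ≤ Ustar i := by
    -- iterates of Mbb starting at V are decreasing and eventually strictly below V
    set W0 : Fin n → EReal := fun j => ((V j : ℝ) : EReal) with hW0
    have hanti := Mbb_iter_antitone A y h3 hsubV
    have hlt : ∀ i, ∃ m : ℕ, (Mbb A y)^[m] W0 i < ((V i : ℝ) : EReal) := by
      intro i
      obtain ⟨m₁, m₂, hm12, hstrict⟩ := h4 V i
      refine ⟨m₂, lt_of_lt_of_le hstrict ?_⟩
      have := hanti 0 m₁ (Nat.zero_le _) i
      simpa using this
    choose mf hmf using hlt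
    set M : ℕ := Finset.univ.sup mf with hM
    have hMi : ∀ i, (Mbb A y)^[M] W0 i < ((V i : ℝ) : EReal) := by
      intro i
      exact lt_of_le_of_lt (hanti (mf i) M (Finset.le_sup (Finset.mem_univ i)) i) (hmf i)
    have hdelta : ∀ i, ∃ δ : ℝ, 0 < δ ∧ (Mbb A y)^[M] W0 i ≤ ((V i - δ : ℝ) : EReal) :=
      fun i => ereal_lt_coe_delta (hMi i)
    choose δf hδf using hdelta
    set δ : ℝ := Finset.univ.inf' ⟨i0, Finset.mem_univ i0⟩ δf with hδ
    have hδpos : 0 < δ := by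
      obtain ⟨j, _, hj⟩ := Finset.exists_mem_eq_inf' ⟨i0, Finset.mem_univ i0⟩ δf
      rw [hδ, hj]
      exact (hδf j).1
    have hδle : ∀ i, (Mbb A y)^[M] W0 i ≤ ((V i - δ : ℝ) : EReal) := by
      intro i
      refine le_trans ((hδf i).2) ?_
      rw [EReal.coe_le_coe_iff]
      have : δ ≤ δf i := Finset.inf'_le _ (Finset.mem_univ i)
      linarith
    -- main estimate for every positive η
    have hmain : ∀ η : ℝ, 0 < η → ∀ i, V i - Ustar i ≤ K * η := by
      intro η hη i
      set εq : ℝ := min η (δ / (M + 1)) with hεq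
      have hεqpos : 0 < εq := lt_min hη (div_pos hδpos (by positivity))
      -- choose εq-optimal controls row by row
      have hq : ∀ i, ∃ q : ∀ i, P i, -εq < y q i - (A q).mulVec V i := by
        intro i
        obtain ⟨c, hcmem, hclt, _⟩ := (hV i).exists_between (by linarith : (-εq : ℝ) < 0)
        obtain ⟨q, rfl⟩ := hcmem
        exact ⟨q, hclt⟩
      choose qf hqf using hq
      set pε : ∀ i, P i := fun i => qf i i with hpε
      have hrowagree : ∀ i, (∀ j, A pε i j = A (qf i) i j) ∧ y pε i = y (qf i) i :=
        fun i => hrd pε (qf i) i rfl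
      have hopt : ∀ i, -εq < y pε i - (A pε).mulVec V i := by
        intro i
        have h1 := hqf i
        have h2 : (A pε).mulVec V i = (A (qf i)).mulVec V i := by
          simp only [Matrix.mulVec, dotProduct]
          exact Finset.sum_congr rfl fun j _ => by rw [(hrowagree i).1 j]
        rw [(hrowagree i).2, h2]
        exact h1
      have hAx : ∀ i, (A pε).mulVec (V - Ustar) i ≤ εq := by
        intro i
        rw [Matrix.mulVec_sub, Pi.sub_apply]
        have h1 := hopt i
        have h2 := hsubfull i pε
        linarith
      by_cases hUq : IsUnit (A pε).det
      · have := key pε hUq _ _ (le_of_lt hεqpos) hAx i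
        have hεqη : εq ≤ η := min_le_left _ _
        have : V i - Ustar i ≤ K * εq := by simpa using this
        nlinarith
      · exfalso
        obtain ⟨hZ, hWdd, hd, _⟩ := h3 pε
        have hdet0 : (A pε).det = 0 := by
          by_contra h
          exact hUq (isUnit_iff_ne_zero.2 h)
        obtain ⟨z, hz0, hAz⟩ := Matrix.exists_mulVec_eq_zero_iff.2 hdet0
        have hneg : ∃ (v : Fin n → ℝ), (∀ i, 0 ≤ (A pε).mulVec v i) ∧ ∃ i, v i < 0 := by
          have hzj : ∃ j, z j ≠ 0 := by
            by_contra h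
            push_neg at h
            exact hz0 (funext h)
          obtain ⟨j, hj⟩ := hzj
          rcases lt_or_gt_of_ne hj with h | h
          · exact ⟨z, fun i => by rw [congrFun hAz i]; simp, ⟨j, h⟩⟩
          · refine ⟨-z, fun i => ?_, ⟨j, by simpa using h⟩⟩
            rw [Matrix.mulVec_neg]
            simp [congrFun hAz i]
        obtain ⟨v, hv1, hv2⟩ := hneg
        obtain ⟨J, hJne, hJ⟩ := trapped_of_min_neg hZ hWdd hd hv1 hv2
        have hrowJ : ∀ i ∈ J, ¬ SDDRow (A pε) i ∧ (∀ j, j ∉ J → A pε i j = 0)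
            ∧ -εq ≤ y pε i - (A pε).mulVec V i := by
          intro i hi
          exact ⟨(hJ i hi).1, (hJ i hi).2, le_of_lt (hopt i)⟩
        obtain ⟨iJ, hiJ⟩ := hJne
        have hlow := Mbb_iter_lower_bound A y h3 (le_of_lt hεqpos) hrowJ M iJ hiJ
        have hup := hδle iJ
        have hcontr : V iJ - (M : ℝ) * εq ≤ V iJ - δ := by
          rw [← EReal.coe_le_coe_iff]
          exact le_trans hlow hup
        have hεqδ : εq ≤ δ / (M + 1) := min_le_right _ _
        have hMpos : (0:ℝ) < (M : ℝ) + 1 := by positivity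
        have : (M : ℝ) * εq ≤ (M : ℝ) * (δ / (M + 1)) :=
          mul_le_mul_of_nonneg_left hεqδ (Nat.cast_nonneg M)
        have hfrac : (M : ℝ) * (δ / (M + 1)) < δ := by
          rw [mul_div_assoc']
          rw [div_lt_iff₀ hMpos]
          nlinarith
        linarith
    intro i
    have : ∀ ρ : ℝ, 0 < ρ → V i - Ustar i ≤ ρ := by
      intro ρ hρ
      have h1 := hmain (ρ / (K + 1)) (by positivity) i
      have h2 : K * (ρ / (K + 1)) ≤ ρ := by
        rw [mul_div_assoc']
        rw [div_le_iff₀ (by linarith : (0:ℝ) < K + 1)]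
        nlinarith
      linarith
    have := le_of_forall_pos_le_add (a := V i - Ustar i) (b := 0) (by
      intro ρ hρ
      simpa using this ρ hρ)
    linarith
  funext i
  exact le_antisymm (hdir2 i) (hdir1 i)
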